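/- (Lemma 2.1, bipartite Coxeter element.) Let Γ be a finite bipartite simple graph with parts O and E, with adjacency matrix I, and suppose μ ∈ ℂ^V and q ∈ ℂ, q ≠ 0, satisfy I·μ = (q + q^{−1})·μ. Set Λ := Σ_{a∈E} μ_a e_a + q·Σ_{a∈O} μ_a e_a. Then (s_O ∘ s_E)(Λ) = q²·Λ, where s_O is the composition of the reflections s_a over a ∈ O and s_E the composition over a ∈ E (these compositions are well defined since s_a and s_b commute for non-adjacent a, b). -/

import Mathlib

open Finset

/-- The reflection `s_a` on `ℂ^V` attached to a vertex `a` of a simple graph `G`: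
it sends the basis vector `e_a` to `−e_a` and `e_b` to `e_b + I_{ab}·e_a` for `b ≠ a`,
where `I` is the adjacency matrix.  In coordinates, `(s_a v)_c = v_c` for `c ≠ a` and
`(s_a v)_a = (∑_b I_{ab} v_b) − v_a`. -/
noncomputable def sRef {V : Type*} [Fintype V] [DecidableEq V]
    (G : SimpleGraph V) [DecidableRel G.Adj] (a : V) (v : V → ℂ) : V → ℂ :=
  fun c => if c = a then (∑ b, if G.Adj a b then v b else 0) - v a else v c

/-- The composition `s_{a₁} ∘ s_{a₂} ∘ … ∘ s_{aₙ}` of reflections along a list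
`L = [a₁, …, aₙ]` of vertices (the reflection at the last entry is applied first). -/
noncomputable def compList {V : Type*} [Fintype V] [DecidableEq V]
    (G : SimpleGraph V) [DecidableRel G.Adj] (L : List V) (v : V → ℂ) : V → ℂ :=
  L.foldr (fun a w => sRef G a w) v

lemma compList_indep {V : Type*} [Fintype V] [DecidableEq V]
    (G : SimpleGraph V) [DecidableRel G.Adj]
    (L : List V) (hnd : L.Nodup)
    (hind : ∀ a ∈ L, ∀ b ∈ L, ¬ G.Adj a b) (v : V → ℂ) (c : V) :
    compList G L v c =
      if c ∈ L then (∑ b, if G.Adj c b then v b else 0) - v c else v c := by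
  induction L generalizing c with
  | nil => simp [compList]
  | cons a L ih =>
    have hndL : L.Nodup := hnd.of_cons
    have haL : a ∉ L := by simp_all [List.nodup_cons]
    have hindL : ∀ x ∈ L, ∀ y ∈ L, ¬ G.Adj x y := fun x hx y hy =>
      hind x (List.mem_cons_of_mem _ hx) y (List.mem_cons_of_mem _ hy)
    have key : ∀ b, compList G L v b =
        if b ∈ L then (∑ d, if G.Adj b d then v d else 0) - v b else v b :=
      fun b => ih hndL hindL b
    show sRef G a (compList G L v) c = _
    unfold sRef
    by_cases hca : c = a
    · subst hca
      rw [if_pos rfl, if_pos (@List.mem_cons_self _ c L)]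
      have hsum : (∑ b, if G.Adj c b then compList G L v b else 0)
          = ∑ b, if G.Adj c b then v b else 0 := by
        refine Finset.sum_congr rfl fun b _ => ?_
        by_cases hadj : G.Adj c b
        · have hbL : b ∉ L := fun hbL =>
            hind c List.mem_cons_self b (List.mem_cons_of_mem _ hbL) hadj
          rw [if_pos hadj, if_pos hadj, key b, if_neg hbL]
        · rw [if_neg hadj, if_neg hadj]
      rw [hsum, key c, if_neg haL]
    · rw [if_neg hca, key c]
      have : (c ∈ a :: L) ↔ c ∈ L := by
        simp [List.mem_cons, hca]
      by_cases hcL : c ∈ L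
      · rw [if_pos hcL, if_pos (this.mpr hcL)]
      · rw [if_neg hcL, if_neg (fun h => hcL (this.mp h))]

/-- **Lemma 2.1, bipartite Coxeter element.**
Let `Γ` be a finite bipartite simple graph with parts `O` and `E` and adjacency matrix `I`,
and suppose `μ ∈ ℂ^V` and `q ≠ 0` satisfy `I·μ = (q + q⁻¹)·μ`.  Set
`Λ := ∑_{a∈E} μ_a e_a + q·∑_{a∈O} μ_a e_a`.  Then `(s_O ∘ s_E)(Λ) = q²·Λ`, where `s_O` is
the composition of the reflections `s_a` over `a ∈ O` (in any order — the order is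
immaterial since `s_a` and `s_b` commute for non-adjacent `a`, `b`) and `s_E` is the
composition over `a ∈ E`. -/
theorem bipartite_coxeter_eigenvector {V : Type*} [Fintype V] [DecidableEq V]
    (G : SimpleGraph V) [DecidableRel G.Adj]
    (O E : Finset V) (hdisj : Disjoint O E) (hcover : ∀ v : V, v ∈ O ∨ v ∈ E)
    (hbip : ∀ a b : V, G.Adj a b → (a ∈ O ∧ b ∈ E) ∨ (a ∈ E ∧ b ∈ O))
    (μ : V → ℂ) (q : ℂ) (hq : q ≠ 0)
    (heig : ∀ a : V, (∑ b, if G.Adj a b then μ b else 0) = (q + q⁻¹) * μ a)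
    (Λ : V → ℂ) (hΛ : ∀ a : V, Λ a = if a ∈ O then q * μ a else μ a)
    (LO LE : List V) (hLOnd : LO.Nodup) (hLEnd : LE.Nodup)
    (hLO : ∀ x : V, x ∈ LO ↔ x ∈ O) (hLE : ∀ x : V, x ∈ LE ↔ x ∈ E) :
    compList G LO (compList G LE Λ) = fun a => q ^ 2 * Λ a := by
  have hOE : ∀ {a b : V}, a ∈ O → b ∈ E → a ≠ b := fun h1 h2 heq =>
    (Finset.disjoint_left.mp hdisj h1) (heq ▸ h2)
  have hindE : ∀ a ∈ LE, ∀ b ∈ LE, ¬ G.Adj a b := by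
    intro a ha b hb hadj
    rcases hbip a b hadj with ⟨haO, _⟩ | ⟨_, hbO⟩
    · exact hOE haO ((hLE a).mp ha) rfl
    · exact hOE hbO ((hLE b).mp hb) rfl
  have hindO : ∀ a ∈ LO, ∀ b ∈ LO, ¬ G.Adj a b := by
    intro a ha b hb hadj
    rcases hbip a b hadj with ⟨_, hbE⟩ | ⟨haE, _⟩
    · exact hOE ((hLO b).mp hb) hbE rfl
    · exact hOE ((hLO a).mp ha) haE rfl
  set w := compList G LE Λ with hw
  -- value of w
  have hwval : ∀ c, w c = if c ∈ O then q * μ c else q ^ 2 * μ c := by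
    intro c
    rw [hw, compList_indep G LE hLEnd hindE Λ c]
    by_cases hcE : c ∈ E
    · have hcO : c ∉ O := fun h => hOE h hcE rfl
      rw [if_pos ((hLE c).mpr hcE), if_neg hcO]
      have hsum : (∑ b, if G.Adj c b then Λ b else 0)
          = q * ∑ b, if G.Adj c b then μ b else 0 := by
        rw [Finset.mul_sum]
        refine Finset.sum_congr rfl fun b _ => ?_
        by_cases hadj : G.Adj c b
        · have hbO : b ∈ O := by
            rcases hbip c b hadj with ⟨hcO', _⟩ | ⟨_, h⟩
            · exact absurd hcO' hcO
            · exact h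
          rw [if_pos hadj, if_pos hadj, hΛ b, if_pos hbO]
        · rw [if_neg hadj, if_neg hadj, mul_zero]
      rw [hsum, heig c, hΛ c, if_neg hcO]
      field_simp
      ring
    · have hcO : c ∈ O := (hcover c).resolve_right hcE
      rw [if_neg (fun h => hcE ((hLE c).mp h)), hΛ c, if_pos hcO, if_pos hcO]
  funext c
  rw [compList_indep G LO hLOnd hindO w c]
  by_cases hcO : c ∈ O
  · rw [if_pos ((hLO c).mpr hcO)]
    have hsum : (∑ b, if G.Adj c b then w b else 0)
        = q ^ 2 * ∑ b, if G.Adj c b then μ b else 0 := by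
      rw [Finset.mul_sum]
      refine Finset.sum_congr rfl fun b _ => ?_
      by_cases hadj : G.Adj c b
      · have hbO : b ∉ O := by
          rcases hbip c b hadj with ⟨_, hbE⟩ | ⟨hcE, _⟩
          · exact fun h => hOE h hbE rfl
          · exact absurd hcO (fun h => hOE h hcE rfl)
        rw [if_pos hadj, if_pos hadj, hwval b, if_neg hbO]
      · rw [if_neg hadj, if_neg hadj, mul_zero]
    rw [hsum, heig c, hwval c, if_pos hcO, hΛ c, if_pos hcO]
    field_simp
    ring
  · rw [if_neg (fun h => hcO ((hLO c).mp h)), hwval c, if_neg hcO, hΛ c, if_neg hcO]
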